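/- Fix integers m ≥ 2 and A ≥ 1 and a real number ε > 0. There exists Q₀ ≥ 1 such that for all finite fields K ⊆ L with |K| = q ≥ Q₀ and [L : K] = m, and for every character χ₀ of Kˣ, the following holds: the number of characters θ of Lˣ in general position with θ|_{Kˣ} = χ₀ and [ℚ(θ) : ℚ] ≤ mA is at most ε times the number of characters θ of Lˣ in general position with θ|_{Kˣ} = χ₀. -/

import Mathlib

/-- A character `θ` of `Lˣ` is in *general position* (over `K`) if there is no proper
intermediate field `K ⊆ E ⊊ L` and character `θ'` of `Eˣ` with `θ = θ' ∘ N_{L/E}`,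
where `N_{L/E} : Lˣ → Eˣ` is the norm map. -/
def IsGeneralPosition (K : Type) {L : Type} [Field K] [Field L] [Algebra K L]
    (θ : Lˣ →* ℂˣ) : Prop :=
  ¬ ∃ (E : IntermediateField K L) (_ : E ≠ ⊤) (θ' : (↥E)ˣ →* ℂˣ),
      θ = θ'.comp (Units.map (Algebra.norm (↥E) : L →* ↥E))

/-- The restriction of a character `θ : Lˣ →* ℂˣ` to `Kˣ`. -/
noncomputable def charRestrict (K : Type) {L : Type} [Field K] [Field L] [Algebra K L]
    (θ : Lˣ →* ℂˣ) : Kˣ →* ℂˣ :=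
  θ.comp (Units.map (algebraMap K L : K →* L))

/-- `[ℚ(θ) : ℚ]`: the degree over `ℚ` of the subfield of `ℂ` generated by the values
of a character `θ`. -/
noncomputable def charDegree {G : Type*} [Group G] (θ : G →* ℂˣ) : ℕ :=
  Module.finrank ℚ ↥(IntermediateField.adjoin ℚ (Set.range fun g => ((θ g : ℂˣ) : ℂ)))

open Finset

private lemma hom_ext_of_gen {G H : Type*} [Monoid G] [Monoid H] {g : G}
    (hg : ∀ x : G, ∃ j : ℕ, g ^ j = x) {f₁ f₂ : G →* H} (h : f₁ g = f₂ g) : f₁ = f₂ := by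
  ext x; obtain ⟨j, rfl⟩ := hg x; rw [map_pow, map_pow, h]

private lemma pow_eq_one_of_pow_eq_one {G : Type*} [Group G] {z : G} {a b : ℕ}
    (ha : z ^ a = 1) (hab : a ∣ b) : z ^ b = 1 :=
  orderOf_dvd_iff_pow_eq_one.mp (dvd_trans (orderOf_dvd_iff_pow_eq_one.mpr ha) hab)

private lemma pow_natGcd_eq_one {G : Type*} [Group G] {z : G} {a b : ℕ}
    (ha : z ^ a = 1) (hb : z ^ b = 1) : z ^ Nat.gcd a b = 1 :=
  orderOf_dvd_iff_pow_eq_one.mp (Nat.dvd_gcd (orderOf_dvd_iff_pow_eq_one.mpr ha)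
    (orderOf_dvd_iff_pow_eq_one.mpr hb))

private lemma card_pow_units_complex (j : ℕ) (hj : j ≠ 0) :
    Nat.card {z : ℂˣ // z ^ j = 1} = j := by
  haveI : NeZero j := ⟨hj⟩
  have e : {z : ℂˣ // z ^ j = 1} ≃ rootsOfUnity j ℂ :=
    Equiv.subtypeEquivRight fun z => (mem_rootsOfUnity j z).symm
  rw [Nat.card_congr e, Complex.card_rootsOfUnity]

private lemma finite_pow_units_complex (j : ℕ) (hj : j ≠ 0) :
    Finite {z : ℂˣ // z ^ j = 1} := by
  haveI : NeZero j := ⟨hj⟩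
  exact Finite.of_equiv _ (Equiv.subtypeEquivRight fun z => (mem_rootsOfUnity j z).symm).symm

private lemma geom_sum_le_two_pow {q : ℕ} (hq : 2 ≤ q) :
    ∀ e : ℕ, 1 ≤ e → (∑ i ∈ Finset.range e, q ^ i) ≤ 2 * q ^ (e - 1)
  | 1, _ => by simp
  | (e+2), _ => by
    have ih := geom_sum_le_two_pow hq (e+1) (by omega)
    rw [Finset.sum_range_succ]
    have h1 : 2 * q ^ e ≤ q ^ (e + 1) := by
      rw [pow_succ]
      calc 2 * q ^ e = q ^ e * 2 := by ring
      _ ≤ q ^ e * q := by exact Nat.mul_le_mul_left _ hq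
    calc (∑ i ∈ Finset.range (e+1), q ^ i) + q ^ (e+1) ≤ 2 * q ^ e + q ^ (e+1) := by
          simpa using ih
      _ ≤ q ^ (e+1) + q ^ (e+1) := by omega
      _ = 2 * q ^ (e + 2 - 1) := by rw [show e + 2 - 1 = e + 1 from rfl]; ring

private lemma nat_le_two_mul_totient_sq (n : ℕ) : n ≤ 2 * n.totient ^ 2 := by
  rcases Nat.eq_zero_or_pos n with rfl | hn
  · simp
  have key := Nat.totient_mul_prod_primeFactors n
  set P := ∏ p ∈ n.primeFactors, p with hP
  set Q := ∏ p ∈ n.primeFactors, (p - 1) with hQ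
  have hQpos : 0 < Q := Finset.prod_pos fun p hp =>
    Nat.sub_pos_of_lt (Nat.prime_of_mem_primeFactors hp).one_lt
  have hPle : P ≤ n := Nat.le_of_dvd hn (Nat.prod_primeFactors_dvd n)
  have hQle : Q ≤ n.totient := by
    have h1 : n * Q ≤ n.totient * n := by rw [← key]; exact Nat.mul_le_mul_left _ hPle
    have := Nat.le_of_mul_le_mul_right (by linarith [h1] : Q * n ≤ n.totient * n) hn
    exact this
  have hP2 : P ≤ 2 ^ n.primeFactors.card * Q := by
    rw [hP, hQ, ← Finset.prod_const, ← Finset.prod_mul_distrib]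
    exact Finset.prod_le_prod' fun p hp => by
      have := (Nat.prime_of_mem_primeFactors hp).two_le; omega
  have h2w : 2 ^ n.primeFactors.card ≤ 2 * Q := by
    by_cases h2 : 2 ∈ n.primeFactors
    · have hcard : n.primeFactors.card = (n.primeFactors.erase 2).card + 1 :=
        (Finset.card_erase_add_one h2).symm
      have hQe : Q = ∏ p ∈ n.primeFactors.erase 2, (p - 1) := by
        rw [hQ, ← Finset.mul_prod_erase _ _ h2]; simp
      have : (2:ℕ) ^ (n.primeFactors.erase 2).card ≤ ∏ p ∈ n.primeFactors.erase 2, (p - 1) := by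
        rw [← Finset.prod_const]
        refine Finset.prod_le_prod' fun p hp => ?_
        have hpp := Nat.prime_of_mem_primeFactors (Finset.mem_of_mem_erase hp)
        have hne := Finset.ne_of_mem_erase hp
        have := hpp.two_le
        rcases Nat.lt_or_ge p 3 with h | h
        · omega
        · omega
      rw [hcard, pow_succ, hQe]
      calc 2 ^ (n.primeFactors.erase 2).card * 2
          ≤ (∏ p ∈ n.primeFactors.erase 2, (p - 1)) * 2 := Nat.mul_le_mul_right _ this
        _ = 2 * ∏ p ∈ n.primeFactors.erase 2, (p - 1) := by ring
    · have : (2:ℕ) ^ n.primeFactors.card ≤ Q := by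
        rw [hQ, ← Finset.prod_const]
        refine Finset.prod_le_prod' fun p hp => ?_
        have hpp := Nat.prime_of_mem_primeFactors hp
        have := hpp.two_le
        have : p ≠ 2 := fun h => h2 (h ▸ hp)
        omega
      omega
  have hfinal : n * Q ≤ n.totient * (2 * Q * n.totient) := by
    calc n * Q = n.totient * P := key.symm
      _ ≤ n.totient * (2 ^ n.primeFactors.card * Q) := Nat.mul_le_mul_left _ hP2
      _ ≤ n.totient * (2 * Q * n.totient) := by
          refine Nat.mul_le_mul_left _ ?_
          calc 2 ^ n.primeFactors.card * Q ≤ (2 * Q) * Q := Nat.mul_le_mul_right _ h2w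
            _ ≤ 2 * Q * n.totient := Nat.mul_le_mul_left _ hQle
  have : n ≤ n.totient * (2 * n.totient) := by
    have := Nat.le_of_mul_le_mul_right
      (by linarith [hfinal] : n * Q ≤ n.totient * (2 * n.totient) * Q) hQpos
    exact this
  calc n ≤ n.totient * (2 * n.totient) := this
    _ = 2 * n.totient ^ 2 := by ring

private lemma card_subtype_and_exists_le {α : Type*} {r : α → Prop} (p : ℕ → α → Prop)
    [hfin : Finite {z : α // r z}] (s : Finset ℕ) :
    Nat.card {z : α // r z ∧ ∃ e ∈ s, p e z} ≤ ∑ e ∈ s, Nat.card {z : α // r z ∧ p e z} := by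
  classical
  have hF : ∀ X : α → Prop, Finite {z : α // r z ∧ X z} := fun X =>
    Finite.of_injective (fun z : {z : α // r z ∧ X z} => (⟨z.1, z.2.1⟩ : {z : α // r z}))
      fun x y hxy => by
        have h' := congrArg Subtype.val hxy
        exact Subtype.ext h'
  induction s using Finset.induction_on with
  | empty =>
    have : IsEmpty {z : α // r z ∧ ∃ e ∈ (∅ : Finset ℕ), p e z} :=
      ⟨fun z => by simpa using z.2.2⟩
    simp
  | @insert a s ha ih =>
    haveI := hF (fun z => p a z)
    haveI := hF (fun z => ∃ e ∈ s, p e z)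
    classical
    calc Nat.card {z : α // r z ∧ ∃ e ∈ insert a s, p e z}
        ≤ Nat.card ({z : α // r z ∧ p a z} ⊕ {z : α // r z ∧ ∃ e ∈ s, p e z}) := by
          refine Nat.card_le_card_of_injective (fun z =>
            if h : p a z.1 then Sum.inl ⟨z.1, z.2.1, h⟩ else
              Sum.inr ⟨z.1, z.2.1, by
                obtain ⟨e, he, hpe⟩ := z.2.2
                rcases Finset.mem_insert.mp he with rfl | h'
                · exact absurd hpe h
                · exact ⟨e, h', hpe⟩⟩) ?_
          intro x y hxy
          simp only [] at hxy
          split_ifs at hxy <;>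
            first
              | exact Subtype.ext (by simpa using hxy)
              | simp at hxy
      _ = Nat.card {z : α // r z ∧ p a z} + Nat.card {z : α // r z ∧ ∃ e ∈ s, p e z} :=
          Nat.card_sum
      _ ≤ Nat.card {z : α // r z ∧ p a z} + ∑ e ∈ s, Nat.card {z : α // r z ∧ p e z} := by
          have := ih; omega
      _ = ∑ e ∈ insert a s, Nat.card {z : α // r z ∧ p e z} := (Finset.sum_insert (f := fun e => Nat.card {z : α // r z ∧ p e z}) ha).symm

noncomputable def zmodChar (n : ℕ) (z : ℂˣ) (hz : z ^ n = 1) : Multiplicative (ZMod n) →* ℂˣ :=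
  AddMonoidHom.toMultiplicativeLeft
    (ZMod.lift n ⟨zmultiplesHom (Additive ℂˣ) (Additive.ofMul z), by
      rw [zmultiplesHom_apply, ← ofMul_zpow, zpow_natCast, hz, ofMul_one]⟩)

lemma zmodChar_apply_one (n : ℕ) (z : ℂˣ) (hz : z ^ n = 1) :
    zmodChar n z hz (Multiplicative.ofAdd (1 : ZMod n)) = z := by
  have h1 : (1 : ZMod n) = ((1 : ℤ) : ZMod n) := by push_cast; rfl
  unfold zmodChar
  rw [AddMonoidHom.coe_toMultiplicativeLeft]
  simp only [Function.comp_apply, toAdd_ofAdd]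
  rw [h1, ZMod.lift_coe]
  simp
private lemma totient_orderOf_le_charDegree {G : Type*} [Group G] [Finite G]
    (θ : G →* ℂˣ) (x : G) : (orderOf (θ x)).totient ≤ charDegree θ := by
  have hcard : 0 < Nat.card G := Nat.card_pos
  have hpow : ∀ y : G, (θ y) ^ Nat.card G = 1 := fun y => by
    rw [← map_pow, pow_card_eq_one', map_one]
  have hfin : ∀ y : G, ((θ y : ℂˣ) : ℂ) ^ Nat.card G = 1 := fun y => by
    rw [← Units.val_pow_eq_pow_val, hpow y, Units.val_one]
  set S : Set ℂ := Set.range fun g => ((θ g : ℂˣ) : ℂ) with hS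
  haveI := (Set.finite_range fun g => ((θ g : ℂˣ) : ℂ)).to_subtype
  have hint : ∀ y ∈ S, IsIntegral ℚ y := by
    rintro y ⟨g, rfl⟩
    refine ⟨Polynomial.X ^ Nat.card G - Polynomial.C 1,
      Polynomial.monic_X_pow_sub_C 1 hcard.ne', ?_⟩
    simp [hfin g]
  haveI hFD : FiniteDimensional ℚ (IntermediateField.adjoin ℚ S) :=
    IntermediateField.finiteDimensional_adjoin hint
  set n := orderOf (θ x) with hn
  have hnpos : 0 < n := by
    rw [hn, orderOf_pos_iff]
    exact isOfFinOrder_iff_pow_eq_one.mpr ⟨Nat.card G, hcard, hpow x⟩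
  have hmem : ((θ x : ℂˣ) : ℂ) ∈ IntermediateField.adjoin ℚ S :=
    IntermediateField.subset_adjoin ℚ S ⟨x, rfl⟩
  set F := IntermediateField.adjoin ℚ S with hF
  set ζ : F := ⟨((θ x : ℂˣ) : ℂ), hmem⟩ with hζ
  have hζord : orderOf ζ = n := by
    have h1 : orderOf ((algebraMap F ℂ) ζ) = orderOf ζ :=
      orderOf_injective (algebraMap F ℂ).toMonoidHom (algebraMap F ℂ).injective ζ
    have h2 : (algebraMap F ℂ) ζ = ((θ x : ℂˣ) : ℂ) := rfl
    rw [← h1, h2, hn, orderOf_units]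
  have hprim : IsPrimitiveRoot ζ n := hζord ▸ IsPrimitiveRoot.orderOf ζ
  have key := IsPrimitiveRoot.lcm_totient_le_finrank hprim hprim
    (by rw [Nat.lcm_self]; exact Polynomial.cyclotomic.irreducible_rat hnpos)
  rw [Nat.lcm_self] at key
  exact key


set_option maxHeartbeats 1000000 in
/-- Fix integers `m ≥ 2` and `A ≥ 1` and a real `ε > 0`.  There exists `Q₀ ≥ 1` such that
for all finite fields `K ⊆ L` with `|K| = q ≥ Q₀` and `[L : K] = m`, and every character
`χ₀` of `Kˣ`: the number of characters `θ` of `Lˣ` in general position with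
`θ|_{Kˣ} = χ₀` and `[ℚ(θ) : ℚ] ≤ m·A` is at most `ε` times the number of characters `θ`
of `Lˣ` in general position with `θ|_{Kˣ} = χ₀`. -/
theorem small_proportion_of_bounded_degree_general_position
    (m A : ℕ) (hm : 2 ≤ m) (hA : 1 ≤ A) (ε : ℝ) (hε : 0 < ε) :
    ∃ Q₀ : ℕ, 1 ≤ Q₀ ∧
      ∀ (K L : Type) [Field K] [Field L] [Fintype K] [Fintype L] [Algebra K L],
        Q₀ ≤ Fintype.card K → Module.finrank K L = m →
        ∀ χ₀ : Kˣ →* ℂˣ,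
          (Nat.card {θ : Lˣ →* ℂˣ //
              IsGeneralPosition K θ ∧ charRestrict K θ = χ₀ ∧ charDegree θ ≤ m * A} : ℝ) ≤
            ε * (Nat.card {θ : Lˣ →* ℂˣ //
              IsGeneralPosition K θ ∧ charRestrict K θ = χ₀} : ℝ) := by
  classical
  set B : ℕ := 2 * (m * A) ^ 2 with hB
  set C : ℕ := B.factorial with hC
  have hCpos : 0 < C := Nat.factorial_pos B
  refine ⟨max (4 * m ^ 2) (⌈(2 * (C : ℝ)) / ε⌉₊ + 16),
    le_trans (by omega : (1:ℕ) ≤ ⌈(2 * (C : ℝ)) / ε⌉₊ + 16) (le_max_right _ _), ?_⟩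
  intro K L _ _ _ _ _ hq hrank χ₀
  set q := Fintype.card K with hqdef
  have hq4m : 4 * m ^ 2 ≤ q := le_trans (le_max_left _ _) hq
  have hqC : ⌈(2 * (C : ℝ)) / ε⌉₊ + 16 ≤ q := le_trans (le_max_right _ _) hq
  have hq16 : 16 ≤ q := by omega
  haveI : FiniteDimensional K L := Module.Finite.of_finite
  have cardL : Fintype.card L = q ^ m := by
    rw [Module.card_eq_pow_finrank (K := K) (V := L), hrank]
  set N := Nat.card Lˣ with hNdef
  have hN1 : N = q ^ m - 1 := by
    rw [hNdef, Nat.card_units, Nat.card_eq_fintype_card, cardL]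
  have hNpos : 0 < N := Nat.card_pos
  haveI : NeZero N := ⟨hNpos.ne'⟩
  -- generator of Lˣ
  set e_iso := zmodCyclicMulEquiv (inferInstance : IsCyclic Lˣ) with he_iso
  set g : Lˣ := e_iso (Multiplicative.ofAdd (1 : ZMod N)) with hgdef
  have hgen : ∀ x : Lˣ, ∃ j : ℕ, g ^ j = x := by
    intro x
    refine ⟨(Multiplicative.toAdd (e_iso.symm x)).val, ?_⟩
    rw [hgdef, ← map_pow, ← ofAdd_nsmul, nsmul_eq_mul, mul_one,
      ZMod.natCast_rightInverse _, ofAdd_toAdd, MulEquiv.apply_symm_apply]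
  have horderg : orderOf g = N := by
    rw [hgdef, MulEquiv.orderOf_eq, orderOf_ofAdd_eq_addOrderOf, ZMod.addOrderOf_one]
  -- generator of Kˣ
  obtain ⟨h0, hh0⟩ := IsCyclic.exists_generator (α := Kˣ)
  have hgenK : ∀ y : Kˣ, ∃ j : ℕ, h0 ^ j = y := fun y =>
    (Submonoid.mem_powers_iff _ _).mp ((mem_powers_iff_mem_zpowers).mpr (hh0 y))
  have horderh : orderOf h0 = q - 1 := by
    rw [orderOf_eq_card_of_forall_mem_zpowers hh0, Nat.card_units, Nat.card_eq_fintype_card]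
  set ι : Kˣ →* Lˣ := Units.map (algebraMap K L : K →* L) with hι
  have hιinj : Function.Injective ι := Units.map_injective (algebraMap K L).injective
  obtain ⟨k, hk⟩ := hgen (ι h0)
  set d : ℕ := ∑ i ∈ Finset.range m, q ^ i with hd
  have hdN : d * (q - 1) = N := by
    have hgeom := geom_sum_mul (q : ℤ) m
    have h1 : ((d * (q - 1) : ℕ) : ℤ) = (q : ℤ) ^ m - 1 := by
      rw [hd]
      push_cast [Nat.cast_sub (by omega : 1 ≤ q)]
      exact hgeom
    have h2 : ((N : ℕ) : ℤ) = (q : ℤ) ^ m - 1 := by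
      rw [hN1]
      push_cast [Nat.cast_sub (Nat.one_le_pow m q (by omega))]
      ring
    exact Nat.cast_injective (h1.trans h2.symm)
  have hdq : q ^ (m - 1) ≤ d := by
    rw [hd]
    exact Finset.single_le_sum (fun i _ => Nat.zero_le _) (Finset.mem_range.mpr (by omega))
  have hdpos : 0 < d := lt_of_lt_of_le (by positivity) hdq
  have hknz : k ≠ 0 := by
    intro h0k
    rw [h0k, pow_zero] at hk
    have hone : h0 = 1 := hιinj (by rw [map_one]; exact hk.symm)
    rw [hone, orderOf_one] at horderh
    omega
  have hgcd : Nat.gcd N k = d := by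
    have horder2 : orderOf (g ^ k) = q - 1 := by
      rw [hk, orderOf_injective ι hιinj, horderh]
    have h3 := orderOf_pow (n := k) g
    rw [horderg, horder2] at h3
    have h4 : Nat.gcd N k * (q - 1) = N := by
      rw [h3]; exact Nat.mul_div_cancel' (Nat.gcd_dvd_left _ _)
    exact Nat.eq_of_mul_eq_mul_right (by omega) (h4.trans hdN.symm)
  set w₀ : ℂˣ := χ₀ h0 with hw₀
  have hw₀pow : w₀ ^ (q - 1) = 1 := by
    rw [hw₀, ← map_pow, ← horderh, pow_orderOf_eq_one, map_one]
  have hq1N : (q - 1) ∣ N := ⟨d, by rw [← hdN]; ring⟩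
  -- existence of z₀
  obtain ⟨z₀, hz₀N, hz₀k⟩ : ∃ z₀ : ℂˣ, z₀ ^ N = 1 ∧ z₀ ^ k = w₀ := by
    have hζ := Complex.isPrimitiveRoot_exp N hNpos.ne'
    have hζu : IsPrimitiveRoot (hζ.isUnit hNpos.ne').unit N := hζ.isUnit_unit hNpos.ne'
    set ζ : ℂˣ := (hζ.isUnit hNpos.ne').unit with hzeta
    have hw₀N : w₀ ∈ rootsOfUnity N ℂ := by
      rw [mem_rootsOfUnity]
      exact pow_eq_one_of_pow_eq_one hw₀pow hq1N
    rw [← hζu.zpowers_eq] at hw₀N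
    obtain ⟨s, hs⟩ := Subgroup.mem_zpowers_iff.mp hw₀N
    have hcast : (N : ℤ) = (d : ℤ) * ((q : ℤ) - 1) := by
      rw [← hdN]
      push_cast [Nat.cast_sub (by omega : 1 ≤ q)]
      ring
    have hdvd1 : (N : ℤ) ∣ s * ((q : ℤ) - 1) := by
      rw [← hζu.zpow_eq_one_iff_dvd]
      have h1 : ζ ^ (s * ((q : ℤ) - 1)) = (ζ ^ s) ^ ((q : ℤ) - 1) := by
        rw [← zpow_mul]
      have h2 : ((q : ℤ) - 1) = ((q - 1 : ℕ) : ℤ) := by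
        push_cast [Nat.cast_sub (by omega : 1 ≤ q)]; ring
      rw [h1, hs, h2, zpow_natCast, hw₀pow]
    have hdds : (d : ℤ) ∣ s := by
      rw [hcast] at hdvd1
      have hq1ne : ((q : ℤ) - 1) ≠ 0 := by
        have h2q : (2 : ℤ) ≤ (q : ℤ) := by exact_mod_cast (by omega : 2 ≤ q)
        omega
      exact (mul_dvd_mul_iff_right hq1ne).mp hdvd1
    obtain ⟨c, hc⟩ := hdds
    have hbez := Nat.gcd_eq_gcd_ab N k
    rw [hgcd] at hbez
    set x := Nat.gcdA N k with hx
    set y := Nat.gcdB N k with hy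
    refine ⟨ζ ^ (c * y), ?_, ?_⟩
    · rw [← zpow_natCast, ← zpow_mul, hζu.zpow_eq_one_iff_dvd]
      exact ⟨c * y, by ring⟩
    · have key : ζ ^ (c * y * (k : ℤ) - s) = 1 := by
        rw [hζu.zpow_eq_one_iff_dvd]
        refine ⟨-(x * c), ?_⟩
        rw [hc, hbez]; ring
      have h3 : ζ ^ (c * y * (k : ℤ)) = ζ ^ s := by
        have h4 := zpow_sub ζ (c * y * (k : ℤ)) s
        rw [key] at h4
        exact (div_eq_one.mp h4.symm)
      rw [← zpow_natCast, ← zpow_mul]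
      calc ζ ^ (c * y * (k : ℤ)) = ζ ^ s := h3
        _ = w₀ := hs
  -- character attached to z
  have hΘ : ∀ z : ℂˣ, z ^ N = 1 → ∃ θ : Lˣ →* ℂˣ, θ g = z := by
    intro z hz
    refine ⟨(zmodChar N z hz).comp e_iso.symm.toMonoidHom, ?_⟩
    show zmodChar N z hz (e_iso.symm (e_iso (Multiplicative.ofAdd 1))) = z
    rw [MulEquiv.symm_apply_apply, zmodChar_apply_one]
  let Θ : ∀ z : ℂˣ, z ^ N = 1 → (Lˣ →* ℂˣ) := fun z hz => (hΘ z hz).choose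
  have hΘg : ∀ (z : ℂˣ) (hz : z ^ N = 1), Θ z hz g = z := fun z hz => (hΘ z hz).choose_spec
  haveI hfinN : Finite {z : ℂˣ // z ^ N = 1} := finite_pow_units_complex N hNpos.ne'
  haveI hfinC : Finite {z : ℂˣ // z ^ C = 1} := finite_pow_units_complex C hCpos.ne'
  -- numerator bound
  have hnum : Nat.card {θ : Lˣ →* ℂˣ //
      IsGeneralPosition K θ ∧ charRestrict K θ = χ₀ ∧ charDegree θ ≤ m * A} ≤ C := by
    have hmap : ∀ θ : Lˣ →* ℂˣ, charDegree θ ≤ m * A → (θ g) ^ C = 1 := by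
      intro θ hdeg
      have h1 : (θ g) ^ N = 1 := by rw [← map_pow, hNdef, pow_card_eq_one', map_one]
      have h2 : orderOf (θ g) ∣ N := orderOf_dvd_iff_pow_eq_one.mpr h1
      have h3 : orderOf (θ g) ≠ 0 := by
        intro h0'
        rw [h0'] at h2
        exact hNpos.ne' (Nat.eq_zero_of_zero_dvd h2)
      have h4 : (orderOf (θ g)).totient ≤ m * A :=
        le_trans (totient_orderOf_le_charDegree θ g) hdeg
      have h5 : orderOf (θ g) ≤ B := by
        calc orderOf (θ g) ≤ 2 * (orderOf (θ g)).totient ^ 2 := nat_le_two_mul_totient_sq _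
          _ ≤ 2 * (m * A) ^ 2 := by
              have := Nat.pow_le_pow_left h4 2; omega
          _ = B := hB.symm
      exact pow_eq_one_of_pow_eq_one (pow_orderOf_eq_one (θ g))
        (Nat.dvd_factorial (Nat.pos_of_ne_zero h3) h5)
    calc Nat.card {θ : Lˣ →* ℂˣ //
        IsGeneralPosition K θ ∧ charRestrict K θ = χ₀ ∧ charDegree θ ≤ m * A}
        ≤ Nat.card {z : ℂˣ // z ^ C = 1} := by
          refine Nat.card_le_card_of_injective
            (fun θ => ⟨θ.1 g, hmap θ.1 θ.2.2.2⟩) ?_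
          intro θ₁ θ₂ hθ
          have h6 := congrArg Subtype.val hθ
          exact Subtype.ext (hom_ext_of_gen hgen h6)
      _ = C := card_pow_units_complex C hCpos.ne'
  -- restriction property
  have hrestr : ∀ (z : ℂˣ) (hz : z ^ N = 1), z ^ k = w₀ → charRestrict K (Θ z hz) = χ₀ := by
    intro z hz hzk
    refine hom_ext_of_gen hgenK ?_
    have h7 : charRestrict K (Θ z hz) h0 = (Θ z hz) (ι h0) := rfl
    rw [h7, ← hk, map_pow, hΘg z hz, hzk, hw₀]
  -- general position property
  have hGP : ∀ (z : ℂˣ) (hz : z ^ N = 1),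
      (∀ e ∈ m.properDivisors, z ^ (q ^ e - 1) ≠ 1) → IsGeneralPosition K (Θ z hz) := by
    intro z hz hno
    rintro ⟨E, hE, θ', hfact⟩
    letI : Fintype E := Fintype.ofFinite E
    have hcardE : Fintype.card E = q ^ Module.finrank K E :=
      Module.card_eq_pow_finrank (K := K) (V := E)
    have hzpow : z ^ (q ^ Module.finrank K E - 1) = 1 := by
      have hg' : Θ z hz g = θ' (Units.map ((Algebra.norm (↥E) : L →* ↥E)) g) := by
        rw [hfact]; rfl
      have hu : (Units.map ((Algebra.norm (↥E) : L →* ↥E)) g) ^ (q ^ Module.finrank K E - 1)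
          = 1 := by
        have hcu : Nat.card (↥E)ˣ = q ^ Module.finrank K E - 1 := by
          rw [Nat.card_units, Nat.card_eq_fintype_card, hcardE]
        rw [← hcu]
        exact pow_card_eq_one'
      rw [← hΘg z hz, hg', ← map_pow, hu, map_one]
    have hedvd : Module.finrank K E ∣ m :=
      ⟨Module.finrank E L, by rw [← hrank, ← Module.finrank_mul_finrank K E L]⟩
    have hem : Module.finrank K E ≠ m := by
      intro hem
      apply hE
      have hle : Module.finrank K (⊤ : IntermediateField K L) ≤ Module.finrank K E := by
        rw [IntermediateField.finrank_top', hrank, hem]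
      exact IntermediateField.eq_of_le_of_finrank_le le_top hle
    exact hno (Module.finrank K E) (Nat.mem_properDivisors.mpr
      ⟨hedvd, lt_of_le_of_ne (Nat.le_of_dvd (by omega) hedvd) hem⟩) hzpow
  -- lower bound on good z's mapping into denominator
  haveI hfinP : Finite {z : ℂˣ // (z ^ N = 1 ∧ z ^ k = w₀) ∧
      ∀ e ∈ m.properDivisors, z ^ (q ^ e - 1) ≠ 1} :=
    Finite.of_injective (fun z => (⟨z.1, z.2.1.1⟩ : {z : ℂˣ // z ^ N = 1}))
      (fun a b hab => by
        have h' := congrArg Subtype.val hab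
        exact Subtype.ext h')
  haveI hfinQ : Finite {z : ℂˣ // (z ^ N = 1 ∧ z ^ k = w₀) ∧
      ∃ e ∈ m.properDivisors, z ^ (q ^ e - 1) = 1} :=
    Finite.of_injective (fun z => (⟨z.1, z.2.1.1⟩ : {z : ℂˣ // z ^ N = 1}))
      (fun a b hab => by
        have h' := congrArg Subtype.val hab
        exact Subtype.ext h')
  haveI hfinSθ : Finite (Lˣ →* ℂˣ) := Finite.of_injective
    (fun θ => (⟨θ g, by rw [← map_pow, hNdef, pow_card_eq_one', map_one]⟩ :
      {z : ℂˣ // z ^ N = 1}))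
    (fun θ₁ θ₂ hθ => hom_ext_of_gen hgen (congrArg Subtype.val hθ))
  have hPtoθ : Nat.card {z : ℂˣ // (z ^ N = 1 ∧ z ^ k = w₀) ∧
        ∀ e ∈ m.properDivisors, z ^ (q ^ e - 1) ≠ 1} ≤
      Nat.card {θ : Lˣ →* ℂˣ // IsGeneralPosition K θ ∧ charRestrict K θ = χ₀} := by
    refine Nat.card_le_card_of_injective
      (fun zz => ⟨Θ zz.1 zz.2.1.1, hGP zz.1 zz.2.1.1 zz.2.2, hrestr zz.1 zz.2.1.1 zz.2.1.2⟩) ?_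
    intro z1 z2 hz12
    have h8 := congrArg (fun t : {θ : Lˣ →* ℂˣ //
      IsGeneralPosition K θ ∧ charRestrict K θ = χ₀} => t.1 g) hz12
    simp only at h8
    rw [hΘg z1.1 z1.2.1.1, hΘg z2.1 z2.2.1.1] at h8
    exact Subtype.ext h8
  -- splitting
  have hsplit : d ≤ Nat.card {z : ℂˣ // (z ^ N = 1 ∧ z ^ k = w₀) ∧
        ∀ e ∈ m.properDivisors, z ^ (q ^ e - 1) ≠ 1} +
      Nat.card {z : ℂˣ // (z ^ N = 1 ∧ z ^ k = w₀) ∧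
        ∃ e ∈ m.properDivisors, z ^ (q ^ e - 1) = 1} := by
    have hzprop : ∀ u : ℂˣ, u ^ d = 1 → ((u * z₀) ^ N = 1 ∧ (u * z₀) ^ k = w₀) := by
      intro u hu
      constructor
      · rw [mul_pow, hz₀N, pow_eq_one_of_pow_eq_one hu ⟨q - 1, hdN.symm⟩, one_mul]
      · have hdk : d ∣ k := hgcd ▸ Nat.gcd_dvd_right N k
        rw [mul_pow, hz₀k, pow_eq_one_of_pow_eq_one hu hdk, one_mul]
    rw [← card_pow_units_complex d hdpos.ne', ← Nat.card_sum]
    refine Nat.card_le_card_of_injective (fun u =>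
      if hb : ∃ e ∈ m.properDivisors, (u.1 * z₀) ^ (q ^ e - 1) = 1
      then Sum.inr ⟨u.1 * z₀, hzprop u.1 u.2, hb⟩
      else Sum.inl ⟨u.1 * z₀, hzprop u.1 u.2, fun e he h1 => hb ⟨e, he, h1⟩⟩) ?_
    intro u v huv
    simp only at huv
    split_ifs at huv <;>
      first
        | exact Subtype.ext (mul_right_cancel (a := u.1) (b := z₀) (by simpa using huv))
        | simp at huv
  -- bad set bound
  have hQbound : Nat.card {z : ℂˣ // (z ^ N = 1 ∧ z ^ k = w₀) ∧
      ∃ e ∈ m.properDivisors, z ^ (q ^ e - 1) = 1} ≤ 2 * m ^ 2 * q ^ (m - 2) := by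
    haveI : Finite {z : ℂˣ // z ^ N = 1 ∧ z ^ k = w₀} :=
      Finite.of_injective (fun z => (⟨z.1, z.2.1⟩ : {z : ℂˣ // z ^ N = 1}))
        (fun a b hab => by
          have h' := congrArg Subtype.val hab
          exact Subtype.ext h')
    have step := card_subtype_and_exists_le (r := fun z : ℂˣ => z ^ N = 1 ∧ z ^ k = w₀)
      (fun e z => z ^ (q ^ e - 1) = 1) m.properDivisors
    have hterm : ∀ e ∈ m.properDivisors,
        Nat.card {z : ℂˣ // (z ^ N = 1 ∧ z ^ k = w₀) ∧ z ^ (q ^ e - 1) = 1} ≤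
          2 * m * q ^ (m - 2) := by
      intro e he
      obtain ⟨hedvd, helt⟩ := Nat.mem_properDivisors.mp he
      have hepos : 0 < e := by
        rcases Nat.eq_zero_or_pos e with rfl | h
        · exact absurd (Nat.eq_zero_of_zero_dvd hedvd) (by omega)
        · exact h
      set f := m / e with hf
      have hef : e * f = m := Nat.mul_div_cancel' hedvd
      have hfpos : 0 < f := by
        rcases Nat.eq_zero_or_pos f with h | h
        · rw [h, Nat.mul_zero] at hef; omega
        · exact h
      set de : ℕ := ∑ i ∈ Finset.range e, q ^ i with hde
      have hdepos : 0 < de := by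
        have h9 : q ^ 0 ≤ de :=
          Finset.single_le_sum (fun i _ => Nat.zero_le _) (Finset.mem_range.mpr hepos)
        simpa using lt_of_lt_of_le (by norm_num) h9
      set G : ℕ := Nat.gcd d (q ^ e - 1) with hG
      have hGpos : 0 < G := Nat.gcd_pos_of_pos_left _ hdpos
      have hcard_le_G : Nat.card {z : ℂˣ // (z ^ N = 1 ∧ z ^ k = w₀) ∧
          z ^ (q ^ e - 1) = 1} ≤ G := by
        rcases isEmpty_or_nonempty {z : ℂˣ // (z ^ N = 1 ∧ z ^ k = w₀) ∧
            z ^ (q ^ e - 1) = 1} with hEmp | ⟨⟨z₁, hz₁⟩⟩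
        · rw [Nat.card_of_isEmpty]; exact Nat.zero_le _
        · haveI := finite_pow_units_complex G hGpos.ne'
          rw [← card_pow_units_complex G hGpos.ne']
          refine Nat.card_le_card_of_injective (fun zz => ⟨zz.1 * z₁⁻¹, ?_⟩) ?_
          · obtain ⟨⟨hzN', hzk'⟩, hze'⟩ := zz.2
            obtain ⟨⟨hz1N, hz1k⟩, hz1e⟩ := hz₁
            have huN : (zz.1 * z₁⁻¹) ^ N = 1 := by
              rw [mul_pow, inv_pow, hzN', hz1N]; simp
            have huk : (zz.1 * z₁⁻¹) ^ k = 1 := by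
              rw [mul_pow, inv_pow, hzk', hz1k]; simp
            have hud : (zz.1 * z₁⁻¹) ^ d = 1 := by
              rw [← hgcd]; exact pow_natGcd_eq_one huN huk
            have hue : (zz.1 * z₁⁻¹) ^ (q ^ e - 1) = 1 := by
              rw [mul_pow, inv_pow, hze', hz1e]; simp
            rw [hG]; exact pow_natGcd_eq_one hud hue
          · intro a b hab
            have h' := congrArg Subtype.val hab
            simp only at h'
            exact Subtype.ext (mul_right_cancel h')
      have hdvdZ : ((q : ℤ) ^ e - 1) ∣ ((d : ℤ) - (f : ℤ) * (de : ℤ)) := by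
        have H : ∀ t : ℕ, ((q : ℤ) ^ e - 1) ∣
            ((∑ i ∈ Finset.range (e * t), (q : ℤ) ^ i) - (t : ℤ) * (de : ℤ)) := by
          intro t
          induction t with
          | zero => simp
          | succ t ih =>
            have hsplit2 : ∑ i ∈ Finset.range (e * (t + 1)), (q : ℤ) ^ i
                = (∑ i ∈ Finset.range (e * t), (q : ℤ) ^ i)
                  + (q : ℤ) ^ (e * t) * (de : ℤ) := by
              rw [Nat.mul_succ, Finset.sum_range_add]
              congr 1
              rw [hde]
              push_cast
              rw [Finset.mul_sum]
              refine Finset.sum_congr rfl fun i _ => ?_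
              rw [pow_add]
            have hdvd3 : ((q : ℤ) ^ e - 1) ∣ ((q : ℤ) ^ (e * t) - 1) := by
              rw [pow_mul]
              simpa using sub_dvd_pow_sub_pow ((q : ℤ) ^ e) 1 t
            have heq : (∑ i ∈ Finset.range (e * (t + 1)), (q : ℤ) ^ i)
                - ((t : ℤ) + 1) * (de : ℤ)
                = ((∑ i ∈ Finset.range (e * t), (q : ℤ) ^ i) - (t : ℤ) * (de : ℤ))
                  + ((q : ℤ) ^ (e * t) - 1) * (de : ℤ) := by
              rw [hsplit2]; ring
            rw [show ((t : ℕ) + 1 : ℕ) = (t + 1) from rfl]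
            push_cast
            rw [heq]
            exact dvd_add ih (Dvd.dvd.mul_right hdvd3 _)
        have := H f
        rw [hef] at this
        rw [hd]
        push_cast
        exact this
      have hGle : G ≤ f * de := by
        have h1' : (G : ℤ) ∣ (d : ℤ) := Int.natCast_dvd_natCast.mpr (Nat.gcd_dvd_left _ _)
        have h2' : (G : ℤ) ∣ ((q : ℤ) ^ e - 1) := by
          have h3' := Int.natCast_dvd_natCast.mpr (Nat.gcd_dvd_right d (q ^ e - 1))
          have h4' : ((q ^ e - 1 : ℕ) : ℤ) = (q : ℤ) ^ e - 1 := by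
            push_cast [Nat.cast_sub (Nat.one_le_pow e q (by omega))]; ring
          rwa [h4'] at h3'
        have h5' : (G : ℤ) ∣ ((f : ℤ) * (de : ℤ)) := by
          have h6' := dvd_trans h2' hdvdZ
          have := dvd_sub h1' h6'
          simpa using this
        have h7' : (G : ℤ) ≤ (f : ℤ) * (de : ℤ) := by
          refine Int.le_of_dvd ?_ h5'
          exact_mod_cast Nat.mul_pos hfpos hdepos
        exact_mod_cast h7'
      have hde2 : de ≤ 2 * q ^ (e - 1) := geom_sum_le_two_pow (by omega) e hepos
      have hfm : f ≤ m := Nat.le_of_dvd (by omega) ⟨e, by rw [← hef]; ring⟩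
      have hpowle : q ^ (e - 1) ≤ q ^ (m - 2) := Nat.pow_le_pow_right (by omega) (by omega)
      calc Nat.card {z : ℂˣ // (z ^ N = 1 ∧ z ^ k = w₀) ∧ z ^ (q ^ e - 1) = 1} ≤ G :=
            hcard_le_G
        _ ≤ f * de := hGle
        _ ≤ m * (2 * q ^ (e - 1)) := Nat.mul_le_mul hfm hde2
        _ ≤ m * (2 * q ^ (m - 2)) := by
            have := Nat.mul_le_mul_left 2 hpowle
            exact Nat.mul_le_mul_left m (by omega)
        _ = 2 * m * q ^ (m - 2) := by ring
    have hcardPD : m.properDivisors.card ≤ m := by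
      have hsub : m.properDivisors ⊆ Finset.range m := fun e he =>
        Finset.mem_range.mpr (Nat.mem_properDivisors.mp he).2
      calc m.properDivisors.card ≤ (Finset.range m).card := Finset.card_le_card hsub
        _ = m := Finset.card_range m
    calc Nat.card {z : ℂˣ // (z ^ N = 1 ∧ z ^ k = w₀) ∧
        ∃ e ∈ m.properDivisors, z ^ (q ^ e - 1) = 1}
        ≤ ∑ e ∈ m.properDivisors,
            Nat.card {z : ℂˣ // (z ^ N = 1 ∧ z ^ k = w₀) ∧ z ^ (q ^ e - 1) = 1} := step
      _ ≤ ∑ _e ∈ m.properDivisors, 2 * m * q ^ (m - 2) := Finset.sum_le_sum hterm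
      _ = m.properDivisors.card * (2 * m * q ^ (m - 2)) := by
          rw [Finset.sum_const, smul_eq_mul]
      _ ≤ m * (2 * m * q ^ (m - 2)) := Nat.mul_le_mul_right _ hcardPD
      _ = 2 * m ^ 2 * q ^ (m - 2) := by ring
  -- final arithmetic
  set nP := Nat.card {z : ℂˣ // (z ^ N = 1 ∧ z ^ k = w₀) ∧
    ∀ e ∈ m.properDivisors, z ^ (q ^ e - 1) ≠ 1} with hnP
  set nQ := Nat.card {z : ℂˣ // (z ^ N = 1 ∧ z ^ k = w₀) ∧
    ∃ e ∈ m.properDivisors, z ^ (q ^ e - 1) = 1} with hnQ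
  set nD := Nat.card {θ : Lˣ →* ℂˣ // IsGeneralPosition K θ ∧ charRestrict K θ = χ₀} with hnD
  have hZq : 4 * (m ^ 2 * q ^ (m - 2)) ≤ q ^ (m - 1) := by
    have h1 : q ^ (m - 1) = q ^ (m - 2) * q := by
      rw [← pow_succ]
      congr 1
      omega
    calc 4 * (m ^ 2 * q ^ (m - 2)) = q ^ (m - 2) * (4 * m ^ 2) := by ring
      _ ≤ q ^ (m - 2) * q := Nat.mul_le_mul_left _ hq4m
      _ = q ^ (m - 1) := h1.symm
  have hqpow : q ≤ q ^ (m - 1) := Nat.le_self_pow (by omega) q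
  have htwo : q ≤ 2 * nD := by
    have h1 : d ≤ nP + nQ := hsplit
    have h2 : nP ≤ nD := hPtoθ
    have h3 : nQ ≤ 2 * (m ^ 2 * q ^ (m - 2)) := by
      have := hQbound
      calc nQ ≤ 2 * m ^ 2 * q ^ (m - 2) := hQbound
        _ = 2 * (m ^ 2 * q ^ (m - 2)) := by ring
    omega
  -- conclude over ℝ
  have hnum' : (Nat.card {θ : Lˣ →* ℂˣ //
      IsGeneralPosition K θ ∧ charRestrict K θ = χ₀ ∧ charDegree θ ≤ m * A} : ℝ) ≤ C := by
    exact_mod_cast hnum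
  have hq2C : 2 * (C : ℝ) ≤ ε * q := by
    have h1 : (2 * (C : ℝ)) / ε ≤ ⌈(2 * (C : ℝ)) / ε⌉₊ := Nat.le_ceil _
    have h2 : ((⌈(2 * (C : ℝ)) / ε⌉₊ : ℕ) : ℝ) ≤ q := by
      exact_mod_cast le_trans (by omega : ⌈(2 * (C : ℝ)) / ε⌉₊ ≤ ⌈(2 * (C : ℝ)) / ε⌉₊ + 16) hqC
    have h3 : (2 * (C : ℝ)) / ε ≤ q := le_trans h1 h2
    calc 2 * (C : ℝ) = ((2 * (C : ℝ)) / ε) * ε := by field_simp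
      _ ≤ (q : ℝ) * ε := by
          exact mul_le_mul_of_nonneg_right h3 (le_of_lt hε)
      _ = ε * q := by ring
  have hqD : (q : ℝ) ≤ 2 * nD := by exact_mod_cast htwo
  calc (Nat.card {θ : Lˣ →* ℂˣ //
      IsGeneralPosition K θ ∧ charRestrict K θ = χ₀ ∧ charDegree θ ≤ m * A} : ℝ)
      ≤ C := hnum'
    _ ≤ ε * nD := by nlinarith [hε.le, hq2C, hqD]
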